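/- Let k be a field of characteristic 2 and r ≥ 2. The k-algebra homomorphism τ from k[u_3,u_5,…,u_{2r−1}, t_1,…,t_r] to k[x_1,…,x_{r−1}, t_1,…,t_r] which is the identity on the t_i and sends u_{2a+1} (for 1 ≤ a ≤ r−1) to ∑_{j=1}^{r−1} x_j (t_j + t_r) · e_{a−1}(t_1,…,\hat{t_j},…,t_{r−1}) is injective. -/

import Mathlib

open MvPolynomial Finset
set_option maxHeartbeats 1000000
set_option synthInstance.maxHeartbeats 400000

lemma aux_prod_add {R : Type*} [CommRing R] {ι : Type*} [DecidableEq ι] (s : Finset ι)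
    (t : ι → R) (z : R) :
    ∑ a ∈ range (s.card + 1), z ^ (s.card - a) * ∑ S ∈ powersetCard a s, ∏ i ∈ S, t i
      = ∏ i ∈ s, (t i + z) := by
  rw [Finset.prod_add, powerset_card_disjiUnion]
  erw [sum_disjiUnion]
  refine sum_congr rfl fun a _ => ?_
  rw [mul_sum]
  refine sum_congr rfl fun S hS => ?_
  rw [mem_powersetCard] at hS
  rw [prod_const, card_sdiff_of_subset hS.1, hS.2, mul_comm]

lemma matrix_det_isUnit {K : Type*} [Field K] [CharP K 2] {n : ℕ} (hn : 1 ≤ n)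
    (u : Fin n → K) (z : K)
    (hu : ∀ i j : Fin n, i ≠ j → u i + u j ≠ 0) (hz : ∀ j, u j + z ≠ 0) :
    IsUnit (Matrix.det (fun a j =>
      (u j + z) * ∑ S ∈ powersetCard (a : ℕ) (univ.erase j), ∏ i ∈ S, u i :
        Matrix (Fin n) (Fin n) K)) := by
  classical
  set E : Matrix (Fin n) (Fin n) K :=
    fun a j => ∑ S ∈ powersetCard (a : ℕ) (univ.erase j), ∏ i ∈ S, u i with hE
  set V : Matrix (Fin n) (Fin n) K := fun l a => u l ^ (n - 1 - (a : ℕ)) with hV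
  have hcard : ∀ j : Fin n, (univ.erase j).card = n - 1 := by
    intro j; rw [card_erase_of_mem (mem_univ j), card_univ, Fintype.card_fin]
  have hVE : V * E = Matrix.diagonal (fun j => ∏ i ∈ univ.erase j, (u i + u j)) := by
    ext l j
    rw [Matrix.mul_apply]
    have key : ∑ a : Fin n, V l a * E a j = ∏ i ∈ univ.erase j, (u i + u l) := by
      rw [hV, hE]
      rw [Fin.sum_univ_eq_sum_range (fun a => u l ^ (n - 1 - a) *
        ∑ S ∈ powersetCard a (univ.erase j), ∏ i ∈ S, u i)]
      rw [← aux_prod_add (univ.erase j) u (u l), hcard j,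
        show n - 1 + 1 = n from by omega]
    rw [key]
    by_cases hlj : l = j
    · subst hlj; rw [Matrix.diagonal_apply_eq]
    · rw [Matrix.diagonal_apply_ne _ hlj]
      apply prod_eq_zero (mem_erase.mpr ⟨hlj, mem_univ l⟩)
      exact CharTwo.add_self_eq_zero _
  have hdiagne : ∀ j : Fin n, (∏ i ∈ univ.erase j, (u i + u j)) ≠ 0 := fun j =>
    prod_ne_zero_iff.mpr fun i hi => hu i j (mem_erase.mp hi).1
  have hdetE : E.det ≠ 0 := by
    intro h0
    have h1 := congrArg Matrix.det hVE
    rw [Matrix.det_mul, h0, mul_zero, Matrix.det_diagonal] at h1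
    exact prod_ne_zero_iff.mpr (fun j _ => hdiagne j) h1.symm
  have hMeq : (fun a j => (u j + z) * E a j : Matrix (Fin n) (Fin n) K)
      = E * Matrix.diagonal (fun j => u j + z) := by
    ext a j; rw [Matrix.mul_diagonal, mul_comm]
  rw [show (fun a j => (u j + z) * ∑ S ∈ powersetCard (a : ℕ) (univ.erase j), ∏ i ∈ S, u i :
      Matrix (Fin n) (Fin n) K) = E * Matrix.diagonal (fun j => u j + z) from hMeq]
  rw [Matrix.det_mul, Matrix.det_diagonal]
  exact (Ne.isUnit hdetE).mul (Ne.isUnit (prod_ne_zero_iff.mpr fun j _ => hz j))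

lemma aeval_linear_comp {K : Type*} [CommRing K] {n : ℕ}
    (M N : Matrix (Fin n) (Fin n) K) (h : N * M = 1) :
    (aeval (fun b : Fin n => ∑ j : Fin n, C (M b j) * X j) :
        MvPolynomial (Fin n) K →ₐ[K] MvPolynomial (Fin n) K).comp
      (aeval fun b : Fin n => ∑ j : Fin n, C (N b j) * X j) = AlgHom.id K _ := by
  apply MvPolynomial.algHom_ext
  intro b
  simp only [AlgHom.comp_apply, aeval_X, map_sum, map_mul, aeval_C, AlgHom.id_apply,
    algebraMap_eq]
  calc ∑ j : Fin n, C (N b j) * ∑ l : Fin n, C (M j l) * X l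
      = ∑ l : Fin n, C ((N * M) b l) * X l := by
        simp only [Finset.mul_sum]
        rw [Finset.sum_comm]
        refine sum_congr rfl fun l _ => ?_
        rw [Matrix.mul_apply, map_sum, Finset.sum_mul]
        exact sum_congr rfl fun j _ => by rw [map_mul]; ring
    _ = X b := by
        rw [h]
        simp [Matrix.one_apply, apply_ite C, ite_mul]

lemma aeval_linear_injective {K : Type*} [Field K] {n : ℕ} (M : Matrix (Fin n) (Fin n) K)
    (h : IsUnit M.det) :
    Function.Injective (aeval (fun b : Fin n => ∑ j : Fin n, C (M b j) * X j) :
      MvPolynomial (Fin n) K →ₐ[K] MvPolynomial (Fin n) K) := by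
  have hcomp := aeval_linear_comp M⁻¹ M (Matrix.mul_nonsing_inv M h)
  intro p q hpq
  have h2 := congrArg (aeval (fun b : Fin n => ∑ j : Fin n, C (M⁻¹ b j) * X j) :
      MvPolynomial (Fin n) K →ₐ[K] MvPolynomial (Fin n) K) hpq
  calc p = AlgHom.id K _ p := rfl
    _ = AlgHom.id K _ q := by rw [← hcomp]; exact h2
    _ = q := rfl

lemma Phi_injective (k : Type*) [Field k] (n r : ℕ) :
    Function.Injective (eval₂Hom
      ((C : FractionRing (MvPolynomial (Fin r) k) →+*
          MvPolynomial (Fin n) (FractionRing (MvPolynomial (Fin r) k))).comp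
        ((algebraMap (MvPolynomial (Fin r) k) (FractionRing (MvPolynomial (Fin r) k))).comp
          (C : k →+* MvPolynomial (Fin r) k)))
      (Sum.elim
        (fun b : Fin n => (X b : MvPolynomial (Fin n) (FractionRing (MvPolynomial (Fin r) k))))
        (fun i : Fin r =>
          C (algebraMap (MvPolynomial (Fin r) k) (FractionRing (MvPolynomial (Fin r) k))
            (X i))))) := by
  have hf : Function.Injective
      (algebraMap (MvPolynomial (Fin r) k) (FractionRing (MvPolynomial (Fin r) k))) :=
    IsFractionRing.injective _ _
  have hfact : (eval₂Hom
      ((C : FractionRing (MvPolynomial (Fin r) k) →+* _).comp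
        ((algebraMap (MvPolynomial (Fin r) k) (FractionRing (MvPolynomial (Fin r) k))).comp
          (C : k →+* MvPolynomial (Fin r) k)))
      (Sum.elim
        (fun b : Fin n => (X b : MvPolynomial (Fin n) (FractionRing (MvPolynomial (Fin r) k))))
        (fun i : Fin r =>
          C (algebraMap (MvPolynomial (Fin r) k) (FractionRing (MvPolynomial (Fin r) k))
            (X i)))))
      = (MvPolynomial.map
          (algebraMap (MvPolynomial (Fin r) k) (FractionRing (MvPolynomial (Fin r) k)))).comp
        ((sumAlgEquiv k (Fin n) (Fin r)).toAlgHom.toRingHom) := by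
    apply MvPolynomial.ringHom_ext
    · intro a
      simp [sumAlgEquiv_C_inl]
    · rintro (b | i)
      · simp [sumAlgEquiv_X_inl]
      · simp [sumAlgEquiv_X_inr]
  rw [hfact]
  exact (MvPolynomial.map_injective _ hf).comp (AlgEquiv.injective _)

theorem tau_substitution_injective
    (k : Type*) [Field k] [CharP k 2] (r : ℕ) (hr : 2 ≤ r) :
    Function.Injective
      (MvPolynomial.aeval
        (fun v : Fin (r - 1) ⊕ Fin r =>
          match v with
          | Sum.inl b =>
              ∑ j : Fin (r - 1),
                X (Sum.inl j) *
                  (X (Sum.inr (Fin.castLE (Nat.sub_le r 1) j)) +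
                    X (Sum.inr (⟨r - 1, by omega⟩ : Fin r))) *
                  ∑ s ∈ Finset.powersetCard (b : ℕ)
                      ((Finset.univ : Finset (Fin (r - 1))).erase j),
                    ∏ i ∈ s, X (Sum.inr (Fin.castLE (Nat.sub_le r 1) i))
          | Sum.inr i => X (Sum.inr i)) :
        MvPolynomial (Fin (r - 1) ⊕ Fin r) k →ₐ[k]
          MvPolynomial (Fin (r - 1) ⊕ Fin r) k) := by
  classical
  have hn1 : 1 ≤ r - 1 := by omega
  have main : ∀ τ' : MvPolynomial (Fin (r - 1) ⊕ Fin r) k →ₐ[k]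
      MvPolynomial (Fin (r - 1) ⊕ Fin r) k,
      (∀ b : Fin (r - 1), τ' (X (Sum.inl b)) =
        ∑ j : Fin (r - 1),
          X (Sum.inl j) *
            (X (Sum.inr (Fin.castLE (Nat.sub_le r 1) j)) +
              X (Sum.inr (⟨r - 1, by omega⟩ : Fin r))) *
            ∑ s ∈ Finset.powersetCard (b : ℕ)
                ((Finset.univ : Finset (Fin (r - 1))).erase j),
              ∏ i ∈ s, X (Sum.inr (Fin.castLE (Nat.sub_le r 1) i))) →
      (∀ i : Fin r, τ' (X (Sum.inr i)) = X (Sum.inr i)) →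
      Function.Injective τ' := by
    intro τ' hX1 hX2
    haveI : CharP (MvPolynomial (Fin r) k) 2 :=
      charP_of_injective_ringHom (C_injective (Fin r) k) 2
    have hf : Function.Injective
        (algebraMap (MvPolynomial (Fin r) k) (FractionRing (MvPolynomial (Fin r) k))) :=
      IsFractionRing.injective _ _
    haveI : CharP (FractionRing (MvPolynomial (Fin r) k)) 2 :=
      charP_of_injective_ringHom hf 2
    set t : Fin r → FractionRing (MvPolynomial (Fin r) k) :=
      fun i => algebraMap (MvPolynomial (Fin r) k) (FractionRing (MvPolynomial (Fin r) k)) (X i) with ht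
    have htne : ∀ i j : Fin r, i ≠ j → t i + t j ≠ 0 := by
      intro i j hij h0
      have h1 : X i + X j = (0 : MvPolynomial (Fin r) k) := by
        apply hf; rw [map_add, map_zero]; exact h0
      have h2 : (X i : MvPolynomial (Fin r) k) = X j := by
        rw [eq_neg_of_add_eq_zero_left h1] at *
        exact (CharTwo.neg_eq _)
      exact hij (X_injective h2)
    set ρ : Fin (r - 1) → Fin r := Fin.castLE (Nat.sub_le r 1) with hρ
    set last : Fin r := ⟨r - 1, by omega⟩ with hlast
    have hρne : ∀ i j : Fin (r - 1), i ≠ j → ρ i ≠ ρ j := fun i j hij h =>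
      hij (by simpa [hρ, Fin.ext_iff] using congrArg Fin.val h)
    have hρlast : ∀ j : Fin (r - 1), ρ j ≠ last := by
      intro j h
      have h1 := congrArg Fin.val h
      have h2 := j.isLt
      simp only [hρ, Fin.coe_castLE, hlast] at h1
      omega
    set M : Matrix (Fin (r - 1)) (Fin (r - 1)) (FractionRing (MvPolynomial (Fin r) k)) :=
      fun a j => (t (ρ j) + t last) *
        ∑ S ∈ powersetCard (a : ℕ) (univ.erase j), ∏ i ∈ S, t (ρ i) with hM
    have hdetM : IsUnit M.det :=
      matrix_det_isUnit hn1 (fun j => t (ρ j)) (t last)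
        (fun i j hij => htne _ _ (hρne i j hij)) (fun j => htne _ _ (hρlast j))
    set φ := (aeval (fun b : Fin (r - 1) => ∑ j : Fin (r - 1), C (M b j) * X j) :
      MvPolynomial (Fin (r - 1)) (FractionRing (MvPolynomial (Fin r) k)) →ₐ[_] _) with hφ
    have hφinj : Function.Injective φ := aeval_linear_injective M hdetM
    set Φ := (eval₂Hom
      ((C : FractionRing (MvPolynomial (Fin r) k) →+*
          MvPolynomial (Fin (r - 1)) (FractionRing (MvPolynomial (Fin r) k))).comp
        ((algebraMap (MvPolynomial (Fin r) k) (FractionRing (MvPolynomial (Fin r) k))).comp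
          (C : k →+* MvPolynomial (Fin r) k)))
      (Sum.elim
        (fun b : Fin (r - 1) =>
          (X b : MvPolynomial (Fin (r - 1)) (FractionRing (MvPolynomial (Fin r) k))))
        (fun i : Fin r => C (t i)))) with hΦ
    have hΦinj : Function.Injective Φ := Phi_injective k (r - 1) r
    have hcomm : Φ.comp (τ' : MvPolynomial (Fin (r - 1) ⊕ Fin r) k →+* _)
        = (φ : MvPolynomial (Fin (r - 1)) (FractionRing (MvPolynomial (Fin r) k)) →+* _).comp
          Φ := by
      apply MvPolynomial.ringHom_ext
      · intro a
        have h1 : τ' (C a) = C a := by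
          rw [← algebraMap_eq]; exact τ'.commutes a
        simp [hΦ, hφ, h1, aeval_C, algebraMap_eq]
      · rintro (b | i)
        · simp only [RingHom.comp_apply, RingHom.coe_coe, AlgHom.coe_toRingHom, hX1 b]
          rw [hΦ]
          simp only [map_sum, map_mul, map_add, eval₂Hom_X', Sum.elim_inl, Sum.elim_inr,
            hφ, aeval_X, map_prod]
          refine sum_congr rfl fun j _ => ?_
          rw [hM]
          rw [C_mul, C_add]
          rw [map_sum (C : FractionRing (MvPolynomial (Fin r) k) →+*
            MvPolynomial (Fin (r - 1)) (FractionRing (MvPolynomial (Fin r) k)))]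
          simp only [map_prod]
          ring
        · simp [hΦ, hφ, hX2 i, aeval_C]
    have hcomm' : ∀ p, Φ (τ' p) = φ (Φ p) := fun p => RingHom.congr_fun hcomm p
    intro p q hpq
    apply hΦinj
    apply hφinj
    calc φ (Φ p) = Φ (τ' p) := (hcomm' p).symm
      _ = Φ (τ' q) := congrArg Φ hpq
      _ = φ (Φ q) := hcomm' q
  refine main _ (fun b => ?_) (fun i => ?_) <;> simp [aeval_X]
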